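/- Let S ⊆ ℂ^{n×m} be a linear subspace and Ŝ = { [[0, A],[Bᴴ, 0]] : A, B ∈ S } ⊆ Mat_{n+m}(ℂ). Then for every rank-one matrix X ∈ Mat_{n+m}(ℂ) with ‖X‖₂ = 1 there exists a rank-one matrix x ∈ ℂ^{n×m} with ‖x‖₂ = 1 such that dist₂(x, S) ≤ 2 · dist₂(X, Ŝ). In particular, inf { dist₂(x, S) : x ∈ ℂ^{n×m}, rank(x) = 1, ‖x‖₂ = 1 } ≤ 2 · inf { dist₂(X, Ŝ) : X ∈ Mat_{n+m}(ℂ), rank(X) = 1, ‖X‖₂ = 1 }. -/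

import Mathlib

open Matrix Kronecker BigOperators
open scoped ComplexOrder

noncomputable section

/-- The trace norm (sum of singular values) of a complex matrix: `tr √(AᴴA)`. -/
def traceNorm {m n : Type*} [Fintype m] [Fintype n] [DecidableEq n] (A : Matrix m n ℂ) : ℝ :=
  ((Matrix.posSemidef_conjTranspose_mul_self A).1.eigenvectorUnitary.1 *
    Matrix.diagonal (((↑) : ℝ → ℂ) ∘ (√·) ∘ (Matrix.posSemidef_conjTranspose_mul_self A).1.eigenvalues) *
    (star (Matrix.posSemidef_conjTranspose_mul_self A).1.eigenvectorUnitary : Matrix n n ℂ)).trace.re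

/-- A density matrix: positive semidefinite with trace one. -/
def IsDensity {n : Type*} [Fintype n] [DecidableEq n] (ρ : Matrix n n ℂ) : Prop :=
  ρ.PosSemidef ∧ ρ.trace = 1

/-- Trace norm contraction coefficient of a map on matrices. -/
def etaTr {dA dB : ℕ} (Φ : Matrix (Fin dA) (Fin dA) ℂ → Matrix (Fin dB) (Fin dB) ℂ) : ℝ :=
  sSup {r : ℝ | ∃ ρ σ : Matrix (Fin dA) (Fin dA) ℂ, IsDensity ρ ∧ IsDensity σ ∧ ρ ≠ σ ∧
    r = traceNorm (Φ ρ - Φ σ) / traceNorm (ρ - σ)}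

/-- Optimal success probability for transmitting one of `k` messages through `Φ`. -/
def Psucc {dA dB : ℕ} (Φ : Matrix (Fin dA) (Fin dA) ℂ → Matrix (Fin dB) (Fin dB) ℂ)
    (k : ℕ) : ℝ :=
  sSup {r : ℝ | ∃ (M : Fin k → Matrix (Fin dB) (Fin dB) ℂ)
      (ρ : Fin k → Matrix (Fin dA) (Fin dA) ℂ),
    (∀ i, (M i).PosSemidef) ∧ (∑ i, M i = 1) ∧ (∀ i, IsDensity (ρ i)) ∧
    r = (1 / (k : ℝ)) * ∑ i, ((M i * Φ (ρ i)).trace).re}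

/-- The Euclidean (ℓ₂) norm of a complex vector. -/
def l2norm {n : Type*} [Fintype n] (v : n → ℂ) : ℝ :=
  Real.sqrt (∑ i, ‖v i‖ ^ 2)

/-- Choi state of a map on matrices: `(1/dA) ∑ᵢⱼ Eᵢⱼ ⊗ Φ(Eᵢⱼ)`. -/
def choi {dA dB : ℕ} (Φ : Matrix (Fin dA) (Fin dA) ℂ → Matrix (Fin dB) (Fin dB) ℂ) :
    Matrix (Fin dA × Fin dB) (Fin dA × Fin dB) ℂ :=
  (dA : ℂ)⁻¹ • ∑ i : Fin dA, ∑ j : Fin dA,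
    (Matrix.single i j (1 : ℂ)) ⊗ₖ (Φ (Matrix.single i j (1 : ℂ)))

/-- Frobenius norm of a matrix. -/
def frobNorm {m n : Type*} [Fintype m] [Fintype n] (A : Matrix m n ℂ) : ℝ :=
  Real.sqrt (∑ i, ∑ j, ‖A i j‖ ^ 2)

/-- Frobenius distance from a matrix to a set of matrices. -/
def distMatSet {m n : Type*} [Fintype m] [Fintype n]
    (x : Matrix m n ℂ) (T : Set (Matrix m n ℂ)) : ℝ :=
  sInf {d : ℝ | ∃ y ∈ T, d = frobNorm (x - y)}

/-- The subspace `Ŝ = {[[0, A],[Bᴴ, 0]] : A, B ∈ S}` of `Mat_{n+m}(ℂ)`. -/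
def Shat {n m : ℕ} (S : Submodule ℂ (Matrix (Fin n) (Fin m) ℂ)) :
    Set (Matrix (Fin n ⊕ Fin m) (Fin n ⊕ Fin m) ℂ) :=
  {X | ∃ A ∈ S, ∃ B ∈ S, X = Matrix.fromBlocks 0 A Bᴴ 0}


namespace RankOneAux

def frobSq {m n : Type*} [Fintype m] [Fintype n] (A : Matrix m n ℂ) : ℝ :=
  ∑ i, ∑ j, ‖A i j‖ ^ 2

lemma frobSq_nonneg {m n : Type*} [Fintype m] [Fintype n] (A : Matrix m n ℂ) : 0 ≤ frobSq A := by
  unfold frobSq; positivity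

lemma frobNorm_eq {m n : Type*} [Fintype m] [Fintype n] (A : Matrix m n ℂ) :
    frobNorm A = Real.sqrt (frobSq A) := rfl

lemma frobNorm_nonneg {m n : Type*} [Fintype m] [Fintype n] (A : Matrix m n ℂ) :
    0 ≤ frobNorm A := Real.sqrt_nonneg _

lemma frobSq_eq_sq {m n : Type*} [Fintype m] [Fintype n] (A : Matrix m n ℂ) :
    frobSq A = (frobNorm A) ^ 2 := by
  rw [frobNorm_eq, Real.sq_sqrt (frobSq_nonneg A)]

lemma frobNorm_zero {m n : Type*} [Fintype m] [Fintype n] :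
    frobNorm (0 : Matrix m n ℂ) = 0 := by
  simp [frobNorm]

lemma frobNorm_smul {m n : Type*} [Fintype m] [Fintype n] (c : ℂ) (A : Matrix m n ℂ) :
    frobNorm (c • A) = ‖c‖ * frobNorm A := by
  have h : ∀ i j, ‖(c • A) i j‖ ^ 2 = ‖c‖^2 * ‖A i j‖^2 := by
    intro i j; simp [Matrix.smul_apply, norm_smul, mul_pow]
  simp only [frobNorm, h, ← Finset.mul_sum]
  rw [Real.sqrt_mul (sq_nonneg _), Real.sqrt_sq (norm_nonneg c)]

lemma frobNorm_conjTranspose {m n : Type*} [Fintype m] [Fintype n] (A : Matrix m n ℂ) :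
    frobNorm Aᴴ = frobNorm A := by
  unfold frobNorm
  rw [Finset.sum_comm]
  simp [Matrix.conjTranspose_apply]

lemma frobNorm_mono {m n m' n' : Type*} [Fintype m] [Fintype n] [Fintype m'] [Fintype n']
    {A : Matrix m n ℂ} {B : Matrix m' n' ℂ}
    (h : frobSq A ≤ frobSq B) : frobNorm A ≤ frobNorm B := by
  rw [frobNorm_eq, frobNorm_eq]; exact Real.sqrt_le_sqrt h

lemma distSet_bddBelow {m n : Type*} [Fintype m] [Fintype n]
    (x : Matrix m n ℂ) (T : Set (Matrix m n ℂ)) :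
    BddBelow {d : ℝ | ∃ y ∈ T, d = frobNorm (x - y)} := by
  refine ⟨0, fun d hd => ?_⟩
  obtain ⟨y, _, rfl⟩ := hd
  exact frobNorm_nonneg _

lemma distMatSet_le {m n : Type*} [Fintype m] [Fintype n]
    {x y : Matrix m n ℂ} {T : Set (Matrix m n ℂ)} (hy : y ∈ T) :
    distMatSet x T ≤ frobNorm (x - y) :=
  csInf_le (distSet_bddBelow x T) ⟨y, hy, rfl⟩

lemma le_distMatSet {m n : Type*} [Fintype m] [Fintype n]
    {x : Matrix m n ℂ} {T : Set (Matrix m n ℂ)} (hT : T.Nonempty) {r : ℝ}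
    (H : ∀ y ∈ T, r ≤ frobNorm (x - y)) :
    r ≤ distMatSet x T := by
  apply le_csInf
  · obtain ⟨y, hy⟩ := hT; exact ⟨frobNorm (x - y), y, hy, rfl⟩
  · rintro d ⟨y, hy, rfl⟩; exact H y hy

lemma distMatSet_nonneg {m n : Type*} [Fintype m] [Fintype n]
    {x : Matrix m n ℂ} {T : Set (Matrix m n ℂ)} (hT : T.Nonempty) :
    0 ≤ distMatSet x T :=
  le_distMatSet hT (fun _ _ => frobNorm_nonneg _)

lemma distMatSet_smul_le {k l : Type*} [Fintype k] [Fintype l]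
    (S : Submodule ℂ (Matrix k l ℂ)) (c : ℂ) (x : Matrix k l ℂ) :
    distMatSet (c • x) (S : Set (Matrix k l ℂ)) ≤ ‖c‖ * distMatSet x (S : Set (Matrix k l ℂ)) := by
  have hS : (S : Set (Matrix k l ℂ)).Nonempty := ⟨0, S.zero_mem⟩
  rcases eq_or_ne c 0 with rfl | hc
  · have h := distMatSet_le (x := (0:ℂ) • x) (S.zero_mem)
    simpa [frobNorm_zero] using h
  · have hc' : 0 < ‖c‖ := norm_pos_iff.mpr hc
    rw [← inv_mul_le_iff₀ hc']
    apply le_distMatSet hS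
    intro y hy
    rw [inv_mul_le_iff₀ hc']
    calc distMatSet (c • x) (S : Set (Matrix k l ℂ)) ≤ frobNorm (c • x - c • y) :=
          distMatSet_le (S.smul_mem c hy)
      _ = ‖c‖ * frobNorm (x - y) := by rw [← smul_sub, frobNorm_smul]

lemma frobSq_sub_fromBlocks {n m : ℕ}
    (X : Matrix (Fin n ⊕ Fin m) (Fin n ⊕ Fin m) ℂ)
    (A : Matrix (Fin n) (Fin n) ℂ) (B : Matrix (Fin n) (Fin m) ℂ)
    (C : Matrix (Fin m) (Fin n) ℂ) (D : Matrix (Fin m) (Fin m) ℂ) :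
    frobSq (X - fromBlocks A B C D)
      = frobSq (X.toBlocks₁₁ - A) + frobSq (X.toBlocks₁₂ - B)
        + frobSq (X.toBlocks₂₁ - C) + frobSq (X.toBlocks₂₂ - D) := by
  simp only [frobSq, Fintype.sum_sum_type, Matrix.sub_apply, fromBlocks_apply₁₁,
    fromBlocks_apply₁₂, fromBlocks_apply₂₁, fromBlocks_apply₂₂,
    toBlocks₁₁, toBlocks₁₂, toBlocks₂₁, toBlocks₂₂, Matrix.of_apply,
    Finset.sum_add_distrib]
  ring

lemma rank_toBlocks₁₂_le {n m : ℕ} (X : Matrix (Fin n ⊕ Fin m) (Fin n ⊕ Fin m) ℂ) :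
    X.toBlocks₁₂.rank ≤ X.rank := by
  have h1 : ((1 : Matrix (Fin n ⊕ Fin m) (Fin n ⊕ Fin m) ℂ).submatrix Sum.inl ⇑(Equiv.refl _)) * X
      = X.submatrix Sum.inl id := by
    rw [Matrix.one_submatrix_mul]; rfl
  have h2 : (X.submatrix Sum.inl id) *
      ((1 : Matrix (Fin n ⊕ Fin m) (Fin n ⊕ Fin m) ℂ).submatrix ⇑(Equiv.refl _) Sum.inr)
      = X.submatrix Sum.inl Sum.inr := by
    rw [Matrix.mul_submatrix_one]; rfl
  have hX : X.toBlocks₁₂ = X.submatrix Sum.inl Sum.inr := rfl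
  rw [hX, ← h2, ← h1]
  exact le_trans (Matrix.rank_mul_le_left _ _) (Matrix.rank_mul_le_right _ _)

lemma rank_toBlocks₂₁_le {n m : ℕ} (X : Matrix (Fin n ⊕ Fin m) (Fin n ⊕ Fin m) ℂ) :
    X.toBlocks₂₁.rank ≤ X.rank := by
  have h1 : ((1 : Matrix (Fin n ⊕ Fin m) (Fin n ⊕ Fin m) ℂ).submatrix Sum.inr ⇑(Equiv.refl _)) * X
      = X.submatrix Sum.inr id := by
    rw [Matrix.one_submatrix_mul]; rfl
  have h2 : (X.submatrix Sum.inr id) *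
      ((1 : Matrix (Fin n ⊕ Fin m) (Fin n ⊕ Fin m) ℂ).submatrix ⇑(Equiv.refl _) Sum.inl)
      = X.submatrix Sum.inr Sum.inl := by
    rw [Matrix.mul_submatrix_one]; rfl
  have hX : X.toBlocks₂₁ = X.submatrix Sum.inr Sum.inl := rfl
  rw [hX, ← h2, ← h1]
  exact le_trans (Matrix.rank_mul_le_left _ _) (Matrix.rank_mul_le_right _ _)

lemma rank_pos_of_ne {k l : Type*} [Fintype k] [Fintype l] [DecidableEq l]
    {M : Matrix k l ℂ} (h : M ≠ 0) : 0 < M.rank := by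
  rw [pos_iff_ne_zero]
  intro hM
  apply h
  unfold Matrix.rank at hM
  rw [Submodule.finrank_eq_zero, LinearMap.range_eq_bot] at hM
  ext i j
  have := congrFun (congrFun (congrArg DFunLike.coe hM) (Pi.single j 1)) i
  simpa [Matrix.mulVecLin, Matrix.mulVec_single] using this

lemma rank_smul_le {k l : Type*} [Fintype k] [Fintype l] [DecidableEq k]
    (c : ℂ) (M : Matrix k l ℂ) : (c • M).rank ≤ M.rank := by
  have h : c • M = (c • (1 : Matrix k k ℂ)) * M := by
    rw [Matrix.smul_mul, Matrix.one_mul]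
  rw [h]
  exact Matrix.rank_mul_le_right _ _

lemma rank_stdBasisMatrix_le {k l : Type*} [Fintype k] [Fintype l] [DecidableEq k] [DecidableEq l]
    (i : k) (j : l) : (Matrix.single i j (1:ℂ)).rank ≤ 1 := by
  rw [Matrix.single_eq_single_vecMulVec_single,
    Matrix.vecMulVec_eq Unit (Pi.single i (1:ℂ)) (Pi.single j (1:ℂ))]
  have h1 : (Matrix.replicateCol Unit (Pi.single i (1:ℂ)) * Matrix.replicateRow Unit (Pi.single j (1:ℂ))).rank
      ≤ (Matrix.replicateCol Unit (Pi.single i (1:ℂ))).rank := Matrix.rank_mul_le_left _ _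
  have h2 : (Matrix.replicateCol Unit (Pi.single i (1:ℂ))).rank ≤ Fintype.card Unit :=
    Matrix.rank_le_card_width _
  simpa using h1.trans h2

lemma stdBasisMatrix_ne_zero {k l : Type*} [Fintype k] [Fintype l] [DecidableEq k] [DecidableEq l]
    (i : k) (j : l) : Matrix.single i j (1:ℂ) ≠ 0 := by
  intro h
  have := congrFun (congrFun h i) j
  simp [Matrix.single_apply_same] at this

lemma frobNorm_stdBasisMatrix {k l : Type*} [Fintype k] [Fintype l] [DecidableEq k] [DecidableEq l]
    (i : k) (j : l) : frobNorm (Matrix.single i j (1:ℂ)) = 1 := by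
  have h : ∀ a b, ‖Matrix.single i j (1:ℂ) a b‖ ^ 2
      = if a = i then (if b = j then 1 else 0) else 0 := by
    intro a b
    by_cases ha : a = i <;> by_cases hb : b = j <;>
      simp only [Matrix.single, Matrix.of_apply, ha, hb] <;>
      [skip; rw [if_neg (by tauto)]; rw [if_neg (by tauto)]; rw [if_neg (by tauto)]] <;>
      simp
  simp only [frobNorm, h]
  simp [Finset.sum_ite_eq']

lemma rank_eq_one_of {k l : Type*} [Fintype k] [Fintype l] [DecidableEq l]
    {M : Matrix k l ℂ} (h1 : M.rank ≤ 1) (h2 : M ≠ 0) : M.rank = 1 := by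
  have := rank_pos_of_ne h2
  omega

/-- Key construction: from a block of small distance and big norm, build the witness. -/
lemma build {n m : ℕ} (S : Submodule ℂ (Matrix (Fin n) (Fin m) ℂ))
    (B : Matrix (Fin n) (Fin m) ℂ) (hrk : B.rank ≤ 1)
    (ht : 1/2 < frobNorm B) {ε : ℝ} (hε : 0 ≤ ε)
    (hd : distMatSet B (S : Set (Matrix (Fin n) (Fin m) ℂ)) ≤ ε) :
    ∃ x : Matrix (Fin n) (Fin m) ℂ, x.rank = 1 ∧ frobNorm x = 1 ∧
      distMatSet x (S : Set (Matrix (Fin n) (Fin m) ℂ)) ≤ 2 * ε := by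
  have hS : (S : Set (Matrix (Fin n) (Fin m) ℂ)).Nonempty := ⟨0, S.zero_mem⟩
  set t := frobNorm B with htdef
  have ht0 : (0:ℝ) < t := lt_trans (by norm_num) ht
  set c : ℂ := (t : ℂ)⁻¹ with hcdef
  have hnc : ‖c‖ = t⁻¹ := by
    rw [hcdef, norm_inv, Complex.norm_real, Real.norm_eq_abs, abs_of_pos ht0]
  have hfn : frobNorm (c • B) = 1 := by
    rw [frobNorm_smul, hnc, ← htdef, inv_mul_cancel₀ ht0.ne']
  refine ⟨c • B, ?_, hfn, ?_⟩
  · refine rank_eq_one_of (le_trans (rank_smul_le c B) hrk) ?_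
    intro h0
    rw [h0, frobNorm_zero] at hfn
    norm_num at hfn
  · have h2 : t⁻¹ ≤ 2 := by
      rw [← one_div, div_le_iff₀ ht0]; linarith
    calc distMatSet (c • B) (S : Set (Matrix (Fin n) (Fin m) ℂ))
        ≤ ‖c‖ * distMatSet B (S : Set (Matrix (Fin n) (Fin m) ℂ)) := distMatSet_smul_le S c B
      _ = t⁻¹ * distMatSet B (S : Set (Matrix (Fin n) (Fin m) ℂ)) := by rw [hnc]
      _ ≤ 2 * ε := by
          apply mul_le_mul h2 hd (distMatSet_nonneg hS) (by norm_num)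

end RankOneAux

open RankOneAux

/-- for every normalized rank-one `X ∈ Mat_{n+m}(ℂ)` there is a normalized
rank-one `x ∈ ℂ^{n×m}` with `dist₂(x,S) ≤ 2·dist₂(X,Ŝ)`; in particular the corresponding
infima satisfy `inf_S ≤ 2·inf_Ŝ`. -/
theorem rank_one_dist_comparison {n m : ℕ} (hn : 0 < n) (hm : 0 < m)
    (S : Submodule ℂ (Matrix (Fin n) (Fin m) ℂ)) :
    (∀ X : Matrix (Fin n ⊕ Fin m) (Fin n ⊕ Fin m) ℂ,
      X.rank = 1 → frobNorm X = 1 →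
      ∃ x : Matrix (Fin n) (Fin m) ℂ, x.rank = 1 ∧ frobNorm x = 1 ∧
        distMatSet x (S : Set (Matrix (Fin n) (Fin m) ℂ))
          ≤ 2 * distMatSet X (Shat S)) ∧
    sInf {d : ℝ | ∃ x : Matrix (Fin n) (Fin m) ℂ,
        x.rank = 1 ∧ frobNorm x = 1 ∧
        d = distMatSet x (S : Set (Matrix (Fin n) (Fin m) ℂ))}
      ≤ 2 * sInf {d : ℝ | ∃ X : Matrix (Fin n ⊕ Fin m) (Fin n ⊕ Fin m) ℂ,
        X.rank = 1 ∧ frobNorm X = 1 ∧ d = distMatSet X (Shat S)} := by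
  have hShat_ne : (Shat S).Nonempty := ⟨0, 0, S.zero_mem, 0, S.zero_mem, by simp⟩
  have part1 : ∀ X : Matrix (Fin n ⊕ Fin m) (Fin n ⊕ Fin m) ℂ,
      X.rank = 1 → frobNorm X = 1 →
      ∃ x : Matrix (Fin n) (Fin m) ℂ, x.rank = 1 ∧ frobNorm x = 1 ∧
        distMatSet x (S : Set (Matrix (Fin n) (Fin m) ℂ))
          ≤ 2 * distMatSet X (Shat S) := by
    intro X hrank hfn
    set ε := distMatSet X (Shat S) with hεdef
    have hε0 : 0 ≤ ε := distMatSet_nonneg hShat_ne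
    by_cases hcase : 1 ≤ 2 * ε
    · refine ⟨Matrix.single ⟨0,hn⟩ ⟨0,hm⟩ 1,
        rank_eq_one_of (rank_stdBasisMatrix_le _ _) (stdBasisMatrix_ne_zero _ _),
        frobNorm_stdBasisMatrix _ _, le_trans ?_ hcase⟩
      have h := distMatSet_le (x := Matrix.single (⟨0,hn⟩ : Fin n) (⟨0,hm⟩ : Fin m) (1:ℂ))
        S.zero_mem
      simpa [sub_zero, frobNorm_stdBasisMatrix] using h
    · push_neg at hcase
      have hkey : ∀ Y ∈ Shat S, frobNorm X.toBlocks₁₁ ≤ frobNorm (X - Y) ∧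
          frobNorm X.toBlocks₂₂ ≤ frobNorm (X - Y) ∧
          distMatSet X.toBlocks₁₂ (S : Set (Matrix (Fin n) (Fin m) ℂ)) ≤ frobNorm (X - Y) ∧
          distMatSet X.toBlocks₂₁ᴴ (S : Set (Matrix (Fin n) (Fin m) ℂ)) ≤ frobNorm (X - Y) := by
        rintro Y ⟨A, hA, B, hB, rfl⟩
        have hsq := frobSq_sub_fromBlocks X 0 A Bᴴ 0
        rw [sub_zero, sub_zero] at hsq
        have n0 := frobSq_nonneg X.toBlocks₁₁
        have n1 := frobSq_nonneg (X.toBlocks₁₂ - A)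
        have n2 := frobSq_nonneg (X.toBlocks₂₁ - Bᴴ)
        have n3 := frobSq_nonneg X.toBlocks₂₂
        refine ⟨frobNorm_mono (by linarith), frobNorm_mono (by linarith), ?_, ?_⟩
        · exact le_trans (distMatSet_le hA) (frobNorm_mono (by linarith))
        · refine le_trans (distMatSet_le hB) ?_
          have hconj : frobNorm (X.toBlocks₂₁ᴴ - B) = frobNorm (X.toBlocks₂₁ - Bᴴ) := by
            rw [← frobNorm_conjTranspose (X.toBlocks₂₁ - Bᴴ), Matrix.conjTranspose_sub,
              Matrix.conjTranspose_conjTranspose]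
          rw [hconj]
          exact frobNorm_mono (by linarith)
      have h11 : frobNorm X.toBlocks₁₁ ≤ ε :=
        le_distMatSet hShat_ne (fun Y hY => (hkey Y hY).1)
      have h22 : frobNorm X.toBlocks₂₂ ≤ ε :=
        le_distMatSet hShat_ne (fun Y hY => (hkey Y hY).2.1)
      have hd12 : distMatSet X.toBlocks₁₂ (S : Set (Matrix (Fin n) (Fin m) ℂ)) ≤ ε :=
        le_distMatSet hShat_ne (fun Y hY => (hkey Y hY).2.2.1)
      have hd21 : distMatSet X.toBlocks₂₁ᴴ (S : Set (Matrix (Fin n) (Fin m) ℂ)) ≤ ε :=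
        le_distMatSet hShat_ne (fun Y hY => (hkey Y hY).2.2.2)
      have hsplit : frobSq X.toBlocks₁₁ + frobSq X.toBlocks₁₂ + frobSq X.toBlocks₂₁
          + frobSq X.toBlocks₂₂ = 1 := by
        have h := frobSq_sub_fromBlocks X 0 0 0 0
        simp only [sub_zero] at h
        have h0 : (Matrix.fromBlocks 0 0 0 0 :
            Matrix (Fin n ⊕ Fin m) (Fin n ⊕ Fin m) ℂ) = 0 := by
          simp
        rw [h0, sub_zero] at h
        rw [← h, frobSq_eq_sq, hfn]
        norm_num
      have hs11 : frobSq X.toBlocks₁₁ ≤ ε^2 := by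
        rw [frobSq_eq_sq]
        exact pow_le_pow_left₀ (frobNorm_nonneg _) h11 2
      have hs22 : frobSq X.toBlocks₂₂ ≤ ε^2 := by
        rw [frobSq_eq_sq]
        exact pow_le_pow_left₀ (frobNorm_nonneg _) h22 2
      have hbig : 1/2 < frobSq X.toBlocks₁₂ + frobSq X.toBlocks₂₁ := by nlinarith
      rcases le_total (frobSq X.toBlocks₂₁) (frobSq X.toBlocks₁₂) with hle | hle
      · have ht : 1/2 < frobNorm X.toBlocks₁₂ := by
          nlinarith [frobNorm_nonneg X.toBlocks₁₂, frobSq_eq_sq X.toBlocks₁₂]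
        exact build S _ (le_trans (rank_toBlocks₁₂_le X) (le_of_eq hrank)) ht hε0 hd12
      · have ht : 1/2 < frobNorm X.toBlocks₂₁ᴴ := by
          rw [frobNorm_conjTranspose]
          nlinarith [frobNorm_nonneg X.toBlocks₂₁, frobSq_eq_sq X.toBlocks₂₁]
        have hr : X.toBlocks₂₁ᴴ.rank ≤ 1 := by
          rw [Matrix.rank_conjTranspose]
          exact le_trans (rank_toBlocks₂₁_le X) (le_of_eq hrank)
        exact build S _ hr ht hε0 hd21
  refine ⟨part1, ?_⟩
  set L := {d : ℝ | ∃ x : Matrix (Fin n) (Fin m) ℂ,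
      x.rank = 1 ∧ frobNorm x = 1 ∧
      d = distMatSet x (S : Set (Matrix (Fin n) (Fin m) ℂ))} with hL
  set R := {d : ℝ | ∃ X : Matrix (Fin n ⊕ Fin m) (Fin n ⊕ Fin m) ℂ,
      X.rank = 1 ∧ frobNorm X = 1 ∧ d = distMatSet X (Shat S)} with hR
  have hR_ne : R.Nonempty := by
    refine ⟨_, Matrix.single (Sum.inl ⟨0,hn⟩) (Sum.inl ⟨0,hn⟩) 1,
      rank_eq_one_of (rank_stdBasisMatrix_le _ _) (stdBasisMatrix_ne_zero _ _),
      frobNorm_stdBasisMatrix _ _, rfl⟩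
  have hL_bdd : BddBelow L := by
    refine ⟨0, ?_⟩
    rintro d ⟨x, _, _, rfl⟩
    exact distMatSet_nonneg ⟨0, S.zero_mem⟩
  have hstep : ∀ d ∈ R, sInf L ≤ 2 * d := by
    rintro d ⟨X, hX1, hX2, rfl⟩
    obtain ⟨x, hx1, hx2, hx3⟩ := part1 X hX1 hX2
    exact le_trans (csInf_le hL_bdd ⟨x, hx1, hx2, rfl⟩) hx3
  have h2 : sInf L / 2 ≤ sInf R :=
    le_csInf hR_ne (fun d hd => by have := hstep d hd; linarith)
  linarith
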